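/- An alignment P of strings x and y is uniquely determined by its set of costly edges; that is, if two alignments of x and y have the same set of costly edges, then they are equal as paths. -/

import Mathlib

/-- A single step in the edit-distance grid: horizontal, vertical, or diagonal. -/
def GridStep (p q : ℕ × ℕ) : Prop :=
  (q.1 = p.1 + 1 ∧ q.2 = p.2) ∨ (q.1 = p.1 ∧ q.2 = p.2 + 1) ∨
    (q.1 = p.1 + 1 ∧ q.2 = p.2 + 1)

/-- The list of (directed) edges of a path given as a list of vertices. -/
def pathEdges (P : List (ℕ × ℕ)) : List ((ℕ × ℕ) × (ℕ × ℕ)) := P.zip P.tail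

/-- A spanning path (alignment) of `Grid(x,y)`: a directed path from `(0,0)` to
`(|x|,|y|)` using grid steps. -/
def IsSpanningPath (m n : ℕ) (P : List (ℕ × ℕ)) : Prop :=
  P.head? = some (0, 0) ∧ P.getLast? = some (m, n) ∧ P.Chain' GridStep

/-- An edge is costly unless it is a diagonal edge `(i,j) → (i+1,j+1)` with
`x_{i+1} = y_{j+1}` (1-based indexing of the strings). -/
def IsCostly {α : Type*} (x y : List α) (e : (ℕ × ℕ) × (ℕ × ℕ)) : Prop :=
  ¬ (e.2.1 = e.1.1 + 1 ∧ e.2.2 = e.1.2 + 1 ∧ x[e.1.1]? = y[e.1.2]?)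

private lemma gridStep_sum_lt {p q : ℕ × ℕ} (h : GridStep p q) :
    p.1 + p.2 < q.1 + q.2 := by
  rcases h with ⟨h1, h2⟩ | ⟨h1, h2⟩ | ⟨h1, h2⟩ <;> omega

private lemma chain_sum_lt : ∀ (P : List (ℕ × ℕ)) (a : ℕ × ℕ),
    List.Chain' GridStep (a :: P) → ∀ b ∈ P, a.1 + a.2 < b.1 + b.2 := by
  intro P
  induction P with
  | nil => intro a _ b hb; simp at hb
  | cons c P' ih =>
    intro a hch b hb
    replace hch := List.isChain_cons_cons.mp hch
    rcases List.mem_cons.mp hb with rfl | hb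
    · exact gridStep_sum_lt hch.1
    · exact lt_trans (gridStep_sum_lt hch.1) (ih c hch.2 b hb)

private lemma pathEdges_cons_cons (a b : ℕ × ℕ) (L : List (ℕ × ℕ)) :
    pathEdges (a :: b :: L) = (a, b) :: pathEdges (b :: L) := rfl

private lemma src_mem_of_mem_pathEdges {e : (ℕ × ℕ) × (ℕ × ℕ)} {L : List (ℕ × ℕ)}
    (h : e ∈ pathEdges L) : e.1 ∈ L := by
  have := List.of_mem_zip (show (e.1, e.2) ∈ L.zip L.tail from h)
  exact this.1

private lemma aux {α : Type*} (x y : List α) :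
    ∀ (P Q : List (ℕ × ℕ)) (a mn : ℕ × ℕ),
    List.Chain' GridStep (a :: P) → List.Chain' GridStep (a :: Q) →
    (a :: P).getLast? = some mn → (a :: Q).getLast? = some mn →
    (∀ e, (e ∈ pathEdges (a :: P) ∧ IsCostly x y e) ↔
      (e ∈ pathEdges (a :: Q) ∧ IsCostly x y e)) →
    P = Q := by
  intro P
  induction P with
  | nil =>
    intro Q a mn _ hcQ hlP hlQ _
    cases Q with
    | nil => rfl
    | cons c Q' =>
      exfalso
      simp only [List.getLast?_singleton, Option.some.injEq] at hlP
      rw [List.getLast?_cons_cons] at hlQ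
      obtain ⟨hne, heq⟩ := List.mem_getLast?_eq_getLast (l := c :: Q') hlQ
      have hmem : mn ∈ c :: Q' := heq ▸ List.getLast_mem hne
      have := chain_sum_lt (c :: Q') a hcQ mn hmem
      rw [hlP] at this; omega
  | cons b P' ih =>
    intro Q a mn hcP hcQ hlP hlQ h
    cases Q with
    | nil =>
      exfalso
      simp only [List.getLast?_singleton, Option.some.injEq] at hlQ
      rw [List.getLast?_cons_cons] at hlP
      obtain ⟨hne, heq⟩ := List.mem_getLast?_eq_getLast (l := b :: P') hlP
      have hmem : mn ∈ b :: P' := heq ▸ List.getLast_mem hne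
      have := chain_sum_lt (b :: P') a hcP mn hmem
      rw [hlQ] at this; omega
    | cons c Q' =>
      -- First, show b = c.
      have hstepP : GridStep a b := (List.isChain_cons_cons.mp hcP).1
      have hstepQ : GridStep a c := (List.isChain_cons_cons.mp hcQ).1
      have hb : b = c := by
        by_cases hab : IsCostly x y (a, b)
        · -- (a,b) is a costly edge of P, so it is an edge of Q
          have : (a, b) ∈ pathEdges (a :: c :: Q') :=
            ((h (a, b)).mp ⟨by rw [pathEdges_cons_cons]; exact List.mem_cons_self, hab⟩).1
          rw [pathEdges_cons_cons] at this
          rcases List.mem_cons.mp this with heq | hmem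
          · exact (Prod.ext_iff.mp heq).2
          · exfalso
            have hsrc : (a : ℕ × ℕ) ∈ c :: Q' := src_mem_of_mem_pathEdges hmem
            have := chain_sum_lt (c :: Q') a hcQ a hsrc
            omega
        · by_cases hac : IsCostly x y (a, c)
          · have : (a, c) ∈ pathEdges (a :: b :: P') :=
              ((h (a, c)).mpr ⟨by rw [pathEdges_cons_cons]; exact List.mem_cons_self, hac⟩).1
            rw [pathEdges_cons_cons] at this
            rcases List.mem_cons.mp this with heq | hmem
            · exact (Prod.ext_iff.mp heq).2.symm
            · exfalso
              have hsrc : (a : ℕ × ℕ) ∈ b :: P' := src_mem_of_mem_pathEdges hmem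
              have := chain_sum_lt (b :: P') a hcP a hsrc
              omega
          · -- both non-costly: both are the diagonal from a
            rw [IsCostly, not_not] at hab hac
            have h1 := hab.1; have h2 := hab.2.1
            have h3 := hac.1; have h4 := hac.2.1
            simp only at h1 h2 h3 h4
            exact Prod.ext (by omega) (by omega)
      subst hb
      congr 1
      -- Apply IH with a := b
      apply ih Q' b mn (List.isChain_cons_cons.mp hcP).2 (List.isChain_cons_cons.mp hcQ).2
        (by rw [List.getLast?_cons_cons] at hlP; exact hlP)
        (by rw [List.getLast?_cons_cons] at hlQ; exact hlQ)
      intro e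
      constructor
      · rintro ⟨hmem, hc⟩
        have : e ∈ pathEdges (a :: b :: Q') := by
          refine ((h e).mp ⟨?_, hc⟩).1
          rw [pathEdges_cons_cons]; exact List.mem_cons_of_mem _ hmem
        rw [pathEdges_cons_cons] at this
        rcases List.mem_cons.mp this with heq | hmem'teach
        · exfalso
          have hsrc : e.1 ∈ b :: P' := src_mem_of_mem_pathEdges hmem
          have hlt := chain_sum_lt (b :: P') a hcP e.1 hsrc
          have : e.1 = a := by rw [heq]
          rw [this] at hlt; omega
        · exact ⟨hmem'teach, hc⟩
      · rintro ⟨hmem, hc⟩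
        have : e ∈ pathEdges (a :: b :: P') := by
          refine ((h e).mpr ⟨?_, hc⟩).1
          rw [pathEdges_cons_cons]; exact List.mem_cons_of_mem _ hmem
        rw [pathEdges_cons_cons] at this
        rcases List.mem_cons.mp this with heq | hmem'
        · exfalso
          have hsrc : e.1 ∈ b :: Q' := src_mem_of_mem_pathEdges hmem
          have hlt := chain_sum_lt (b :: Q') a hcQ e.1 hsrc
          have : e.1 = a := by rw [heq]
          rw [this] at hlt; omega
        · exact ⟨hmem', hc⟩

/-- An alignment of `x` and `y` is uniquely determined by its set of costly edges:
two alignments with the same set of costly edges are equal. -/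
theorem alignment_determined_by_costly {α : Type*} (x y : List α) (P Q : List (ℕ × ℕ))
    (hP : IsSpanningPath x.length y.length P) (hQ : IsSpanningPath x.length y.length Q)
    (h : {e | e ∈ pathEdges P ∧ IsCostly x y e} = {e | e ∈ pathEdges Q ∧ IsCostly x y e}) :
    P = Q := by
  obtain ⟨hP1, hP2, hP3⟩ := hP
  obtain ⟨hQ1, hQ2, hQ3⟩ := hQ
  cases P with
  | nil => simp at hP1
  | cons a P' =>
    cases Q with
    | nil => simp at hQ1
    | cons a' Q' =>
      simp only [List.head?_cons, Option.some.injEq] at hP1 hQ1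
      subst hP1; subst hQ1
      congr 1
      exact aux x y P' Q' (0, 0) (x.length, y.length) hP3 hQ3 hP2 hQ2
        (fun e => Set.ext_iff.mp h e)
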